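/- For 0 < x < 1 and all integers n ≥ 0, t, k with the expressions defined, P(Xⁿ_t = k) = P(X^{(n+t)}_{−t} = t+k), i.e., Xⁿ_t has the same distribution as X^{(n+t)}_{−t} − t (a reflection/transpose symmetry). -/

import Mathlib

open MeasureTheory ProbabilityTheory

/-- The countdown process driven by delays `Z 1, ..., Z n`, started at height `n`
at time `-n`. -/
noncomputable def countdown {Ω : Type*} (Z : ℕ → Ω → ℕ) (n : ℕ) (t : ℤ) (ω : Ω) : ℕ :=
  sInf {k : ℕ | ((∑ i ∈ Finset.Icc (k + 1) n, Z i ω : ℕ) : ℤ) ≤ t + k}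



noncomputable section CDAux

variable (x : ℝ)

/-- `∏_{i=1}^m (1 - x^i)`. -/
def cdg (m : ℕ) : ℝ := ∏ i ∈ Finset.Icc 1 m, (1 - x ^ i)

lemma cdg_zero : cdg x 0 = 1 := by simp [cdg]

lemma cdg_succ (m : ℕ) : cdg x (m + 1) = cdg x m * (1 - x ^ (m + 1)) := by
  rw [cdg, cdg, ← Finset.prod_Icc_succ_top (Nat.le_add_left 1 m)]

lemma cdg_pos (hx0 : 0 < x) (hx1 : x < 1) (m : ℕ) : 0 < cdg x m := by
  refine Finset.prod_pos fun i hi => ?_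
  have hi1 : 1 ≤ i := (Finset.mem_Icc.1 hi).1
  have : x ^ i < 1 := pow_lt_one₀ hx0.le hx1 (by omega)
  linarith

/-- q-binomial `[a+m, m]`. -/
def cdqb (a m : ℕ) : ℝ := cdg x (a + m) / (cdg x a * cdg x m)

lemma cdqb_zero (a : ℕ) : cdqb x a 0 = cdg x a / (cdg x a * cdg x 0) := rfl

variable {x} (hx0 : 0 < x) (hx1 : x < 1)

include hx0 hx1

lemma cdqb_zero' (a : ℕ) : cdqb x a 0 = 1 := by
  rw [cdqb, cdg_zero, mul_one]
  exact div_self (cdg_pos x hx0 hx1 a).ne'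

lemma cdqb_zero_left (m : ℕ) : cdqb x 0 m = 1 := by
  rw [cdqb, cdg_zero, Nat.zero_add, one_mul]
  exact div_self (cdg_pos x hx0 hx1 m).ne'

lemma cd_one_sub_pos (i : ℕ) : 0 < 1 - x ^ (i + 1) := by
  have : x ^ (i + 1) < 1 := pow_lt_one₀ hx0.le hx1 (by omega)
  linarith

lemma cdqb_pascal (b M : ℕ) :
    cdqb x (b + 1) (M + 1) = cdqb x b (M + 1) + x ^ (b + 1) * cdqb x (b + 1) M := by
  have hb := (cdg_pos x hx0 hx1 b).ne'
  have hM := (cdg_pos x hx0 hx1 M).ne'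
  have hb1 := (cd_one_sub_pos hx0 hx1 b).ne'
  have hM1 := (cd_one_sub_pos hx0 hx1 M).ne'
  rw [cdqb, cdqb, cdqb, show b + 1 + (M + 1) = (b + 1 + M) + 1 by ring,
    cdg_succ x (b + 1 + M), show b + (M + 1) = b + 1 + M by ring,
    cdg_succ x b, cdg_succ x M,
    show b + 1 + M + 1 = (b + 1) + (M + 1) by ring, pow_add]
  field_simp
  ring

lemma cd_hockey (b M : ℕ) :
    ∑ z ∈ Finset.range (M + 1), x ^ ((b + 1) * z) * cdqb x b (M - z)
      = cdqb x (b + 1) M := by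
  induction M with
  | zero => simp [cdqb_zero' hx0 hx1]
  | succ M ih =>
      rw [Finset.sum_range_succ' (fun z => x ^ ((b + 1) * z) * cdqb x b (M + 1 - z))]
      have : ∀ i ∈ Finset.range (M + 1),
          x ^ ((b + 1) * (i + 1)) * cdqb x b (M + 1 - (i + 1))
            = x ^ (b + 1) * (x ^ ((b + 1) * i) * cdqb x b (M - i)) := by
        intro i hi
        rw [Nat.succ_sub_succ, Nat.mul_succ, pow_add]
        ring
      rw [Finset.sum_congr rfl this, ← Finset.mul_sum, ih]
      simp only [Nat.mul_zero, pow_zero, one_mul, Nat.sub_zero]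
      rw [cdqb_pascal hx0 hx1]
      ring


lemma cd_key (b k : ℕ) :
    (1 - x ^ (b + k + 1)) * (cdqb x b k * cdg x b) = cdqb x (b + 1) k * cdg x (b + 1) := by
  have hb := (cdg_pos x hx0 hx1 b).ne'
  have hk := (cdg_pos x hx0 hx1 k).ne'
  have hb1 := (cd_one_sub_pos hx0 hx1 b).ne'
  rw [cdqb, cdqb, show b + 1 + k = (b + k) + 1 by ring, cdg_succ x (b + k), cdg_succ x b]
  field_simp

end CDAux

noncomputable section CDF

variable {x : ℝ} (hx0 : 0 < x) (hx1 : x < 1)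

/-- The pmf formula. -/
def cdpm (x : ℝ) (n k M : ℕ) : ℝ :=
  x ^ (k * M) * cdqb x (n - k) M * cdqb x (n - k) k * cdg x (n - k)

lemma cdpm_symm {n k : ℕ} (M : ℕ) (hk : k ≤ n) : cdpm x n k M = cdpm x (n - k + M) M k := by
  rw [cdpm, cdpm, Nat.add_sub_cancel, Nat.mul_comm]
  ring

include hx0 hx1

lemma cdpm_nonneg (n k M : ℕ) : 0 ≤ cdpm x n k M := by
  have h1 := cdg_pos x hx0 hx1 (n - k + M)
  have h2 := cdg_pos x hx0 hx1 (n - k + k)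
  have h3 := cdg_pos x hx0 hx1 (n - k)
  have h4 := cdg_pos x hx0 hx1 M
  have h5 := cdg_pos x hx0 hx1 k
  have := pow_pos hx0 (k * M)
  rw [cdpm, cdqb, cdqb]
  positivity

lemma cdpm_top (n M : ℕ) : cdpm x n n M = x ^ (n * M) := by
  rw [cdpm, Nat.sub_self, cdqb_zero_left hx0 hx1, cdqb_zero_left hx0 hx1, cdg_zero]
  ring

lemma cdpm_step {n k : ℕ} (hk : k ≤ n) (M : ℕ) :
    ∑ z ∈ Finset.range (M + 1), x ^ ((n + 1) * z) * (1 - x ^ (n + 1)) * cdpm x n k (M - z)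
      = cdpm x (n + 1) k M := by
  obtain ⟨b, rfl⟩ : ∃ b, n = k + b := ⟨n - k, by omega⟩
  have hnk : k + b - k = b := by omega
  have hnk1 : k + b + 1 - k = b + 1 := by omega
  have hterm : ∀ z ∈ Finset.range (M + 1),
      x ^ ((k + b + 1) * z) * (1 - x ^ (k + b + 1)) * cdpm x (k + b) k (M - z)
        = (x ^ (k * M) * (1 - x ^ (k + b + 1)) * (cdqb x b k * cdg x b))
            * (x ^ ((b + 1) * z) * cdqb x b (M - z)) := by
    intro z hz
    have hzM : z ≤ M := Nat.lt_succ_iff.1 (Finset.mem_range.1 hz)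
    obtain ⟨d, rfl⟩ : ∃ d, M = z + d := ⟨M - z, by omega⟩
    rw [cdpm, hnk, Nat.add_sub_cancel_left,
      show x ^ ((k + b + 1) * z) = x ^ (k * z) * x ^ ((b + 1) * z) by
        rw [← pow_add]; congr 1; ring,
      show x ^ (k * (z + d)) = x ^ (k * z) * x ^ (k * d) by
        rw [← pow_add]; congr 1; ring]
    ring
  rw [Finset.sum_congr rfl hterm, ← Finset.mul_sum, cd_hockey hx0 hx1, cdpm, hnk1]
  have hkey := cd_key hx0 hx1 b k
  rw [show b + k + 1 = k + b + 1 by ring] at hkey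
  linear_combination x ^ (k * M) * cdqb x (b + 1) M * hkey

end CDF


section CDDet

variable {Ω : Type*} (Z : ℕ → Ω → ℕ) (n : ℕ) (t : ℤ) (ω : Ω)

lemma cd_set_nonempty :
    {k : ℕ | ((∑ i ∈ Finset.Icc (k + 1) n, Z i ω : ℕ) : ℤ) ≤ t + k}.Nonempty := by
  refine ⟨n + t.natAbs, ?_⟩
  have h1 : Finset.Icc (n + t.natAbs + 1) n = ∅ := Finset.Icc_eq_empty (by omega)
  simp only [Set.mem_setOf_eq, h1, Finset.sum_empty, Nat.cast_zero]
  omega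

lemma countdown_mem :
    ((∑ i ∈ Finset.Icc (countdown Z n t ω + 1) n, Z i ω : ℕ) : ℤ) ≤ t + countdown Z n t ω :=
  Nat.sInf_mem (cd_set_nonempty Z n t ω)

lemma countdown_nonneg : 0 ≤ t + countdown Z n t ω :=
  le_trans (by positivity) (countdown_mem Z n t ω)

lemma countdown_le (ht : -(n : ℤ) ≤ t) : countdown Z n t ω ≤ n := by
  refine Nat.sInf_le ?_
  have h1 : Finset.Icc (n + 1) n = ∅ := Finset.Icc_eq_empty (by omega)
  simp only [Set.mem_setOf_eq, h1, Finset.sum_empty, Nat.cast_zero]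
  omega

lemma countdown_of_lt (htn : t < -(n : ℤ)) : countdown Z n t ω = (-t).toNat := by
  refine le_antisymm (Nat.sInf_le ?_) ?_
  · have h1 : Finset.Icc ((-t).toNat + 1) n = ∅ := Finset.Icc_eq_empty (by omega)
    simp only [Set.mem_setOf_eq, h1, Finset.sum_empty, Nat.cast_zero]
    omega
  · have h := countdown_mem Z n t ω
    have h0 : (0 : ℤ) ≤ ((∑ i ∈ Finset.Icc (countdown Z n t ω + 1) n, Z i ω : ℕ) : ℤ) := by
      positivity
    omega

lemma countdown_zero : countdown Z 0 t ω = (-t).toNat := by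
  rcases lt_or_ge t (-(0 : ℕ) : ℤ) with h | h
  · exact countdown_of_lt Z 0 t ω h
  · have h1 := countdown_le Z 0 t ω (by omega)
    omega

lemma countdown_succ (ht : -((n : ℤ) + 1) ≤ t) :
    countdown Z (n + 1) t ω = min (n + 1) (countdown Z n (t - Z (n + 1) ω) ω) := by
  set z : ℕ := Z (n + 1) ω with hz
  set A : Set ℕ := {k : ℕ | ((∑ i ∈ Finset.Icc (k + 1) (n + 1), Z i ω : ℕ) : ℤ) ≤ t + k} with hA
  set B : Set ℕ :=
    {k : ℕ | ((∑ i ∈ Finset.Icc (k + 1) n, Z i ω : ℕ) : ℤ) ≤ (t - z) + k} with hB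
  have hAB : ∀ k ≤ n, (k ∈ A ↔ k ∈ B) := by
    intro k hk
    have hsum : (∑ i ∈ Finset.Icc (k + 1) (n + 1), Z i ω)
        = (∑ i ∈ Finset.Icc (k + 1) n, Z i ω) + z := by
      rw [Finset.sum_Icc_succ_top (by omega : k + 1 ≤ n + 1)]
    simp only [hA, hB, Set.mem_setOf_eq, hsum]
    push_cast
    omega
  have hAtop : ∀ k, n + 1 ≤ k → k ∈ A := by
    intro k hk
    have h1 : Finset.Icc (k + 1) (n + 1) = ∅ := Finset.Icc_eq_empty (by omega)
    simp only [hA, Set.mem_setOf_eq, h1, Finset.sum_empty, Nat.cast_zero]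
    omega
  rw [show countdown Z (n + 1) t ω = sInf A from rfl,
    show countdown Z n (t - z) ω = sInf B from rfl]
  have hBne : B.Nonempty := cd_set_nonempty Z n (t - z) ω
  have hAne : A.Nonempty := cd_set_nonempty Z (n + 1) t ω
  refine le_antisymm ?_ ?_
  · rcases le_or_gt (sInf B) n with h | h
    · have : sInf B ∈ A := (hAB _ h).2 (Nat.sInf_mem hBne)
      have := Nat.sInf_le this
      omega
    · have : sInf A ≤ n + 1 := Nat.sInf_le (hAtop _ le_rfl)
      omega
  · have hmemA : sInf A ∈ A := Nat.sInf_mem hAne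
    rcases le_or_gt (sInf A) n with h | h
    · have : sInf B ≤ sInf A := Nat.sInf_le ((hAB _ h).1 hmemA)
      omega
    · omega

end CDDet

section CDProb

variable {Ω : Type*} [MeasurableSpace Ω] (P : Measure Ω) [IsProbabilityMeasure P]
  {x : ℝ} (hx0 : 0 < x) (hx1 : x < 1)
  (Z : ℕ → Ω → ℕ) (hmeas : ∀ i, Measurable (Z i))
  (hindep : iIndepFun Z P)
  (hgeom : ∀ i, 1 ≤ i → ∀ k : ℕ, P {ω | k ≤ Z i ω} = ENNReal.ofReal (x ^ (i * k)))


include hx0 hx1 hmeas hgeom in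
lemma cd_Z_pmf (i : ℕ) (hi : 1 ≤ i) (z : ℕ) :
    P {ω | Z i ω = z} = ENNReal.ofReal (x ^ (i * z) * (1 - x ^ i)) := by
  have hset : {ω | Z i ω = z} = {ω | z ≤ Z i ω} \ {ω | z + 1 ≤ Z i ω} := by
    ext ω; simp only [Set.mem_setOf_eq, Set.mem_diff]; omega
  have hsub : {ω | z + 1 ≤ Z i ω} ⊆ {ω | z ≤ Z i ω} := fun ω h => by
    simp only [Set.mem_setOf_eq] at *; omega
  have hm : MeasurableSet {ω | z + 1 ≤ Z i ω} := by
    have : {ω | z + 1 ≤ Z i ω} = Z i ⁻¹' (Set.Ici (z + 1)) := rfl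
    rw [this]; exact (hmeas i) measurableSet_Ici
  rw [hset, measure_diff hsub hm.nullMeasurableSet (measure_ne_top P _),
    hgeom i hi, hgeom i hi,
    ← ENNReal.ofReal_sub _ (by positivity)]
  congr 1
  rw [Nat.mul_succ, pow_add]
  ring

include hindep hmeas in
lemma cd_indep (n : ℕ) (s : ℤ) (z k : ℕ) :
    P ({ω | Z (n + 1) ω = z} ∩ {ω | countdown Z n s ω = k})
      = P {ω | Z (n + 1) ω = z} * P {ω | countdown Z n s ω = k} := by
  classical
  set S : Finset ℕ := {n + 1} with hS
  set T : Finset ℕ := Finset.Icc 1 n with hT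
  have hST : Disjoint S T := by
    simp only [hS, hT, Finset.disjoint_left, Finset.mem_singleton, Finset.mem_Icc]
    omega
  have base := hindep.indepFun_finset S T hST hmeas
  set φ : (S → ℕ) → ℕ := fun v => v ⟨n + 1, by simp [hS]⟩ with hφ
  set ψ : (T → ℕ) → ℕ := fun v =>
    sInf {k : ℕ | ((∑ i ∈ Finset.Icc (k + 1) n,
      (if h : i ∈ T then v ⟨i, h⟩ else 0) : ℕ) : ℤ) ≤ s + k} with hψ
  have mφ : Measurable φ := measurable_of_countable φ
  have mψ : Measurable ψ := measurable_of_countable ψ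
  have h2 := (base.comp mφ mψ)
  have e1 : (φ ∘ fun a (i : S) => Z i a) = Z (n + 1) := rfl
  have e2 : (ψ ∘ fun a (i : T) => Z i a) = countdown Z n s := by
    funext ω
    simp only [Function.comp_apply, hψ, countdown]
    have hsum : ∀ j : ℕ, (∑ i ∈ Finset.Icc (j + 1) n,
        (if h : i ∈ T then (fun i : T => Z i ω) ⟨i, h⟩ else 0)) =
        ∑ i ∈ Finset.Icc (j + 1) n, Z i ω := by
      intro j
      refine Finset.sum_congr rfl fun i hi => ?_
      have hi' := Finset.mem_Icc.1 hi
      rw [dif_pos (by simp only [hT, Finset.mem_Icc]; omega)]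
    congr 1
    ext j
    simp only [Set.mem_setOf_eq, hsum j]
  rw [e1, e2] at h2
  have := h2.measure_inter_preimage_eq_mul (s := {z}) (t := {k})
    (MeasurableSet.singleton z) (MeasurableSet.singleton k)
  simpa only [Set.preimage, Set.mem_singleton_iff] using this

end CDProb


section CDMain

variable {Ω : Type*} [MeasurableSpace Ω] (P : Measure Ω) [IsProbabilityMeasure P]
  {x : ℝ} (hx0 : 0 < x) (hx1 : x < 1)
  (Z : ℕ → Ω → ℕ) (hmeas : ∀ i, Measurable (Z i))
  (hindep : iIndepFun Z P)
  (hgeom : ∀ i, 1 ≤ i → ∀ k : ℕ, P {ω | k ≤ Z i ω} = ENNReal.ofReal (x ^ (i * k)))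

include hx0 hx1 hmeas hindep hgeom in
lemma cd_pmf : ∀ n : ℕ, ∀ t : ℤ, -(n : ℤ) ≤ t → ∀ k : ℕ, k ≤ n → 0 ≤ t + k →
    P {ω | countdown Z n t ω = k} = ENNReal.ofReal (cdpm x n k (t + k).toNat) := by
  intro n
  induction n with
  | zero =>
      intro t ht k hk hk0
      interval_cases k
      have hev : {ω | countdown Z 0 t ω = 0} = Set.univ := by
        ext ω
        simp only [Set.mem_setOf_eq, Set.mem_univ, iff_true, countdown_zero Z t ω]
        omega
      rw [hev, measure_univ]
      rw [cdpm, Nat.sub_zero, cdqb_zero_left hx0 hx1, cdqb_zero' hx0 hx1, cdg_zero]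
      norm_num
  | succ n ih =>
      intro t ht k hk hk0
      rcases Nat.lt_succ_iff_lt_or_eq.1 (Nat.lt_succ_of_le hk) with hkn | rfl
      · -- k ≤ n
        have hkn' : k ≤ n := by omega
        set M : ℕ := (t + k).toNat with hMdef
        have hM : (M : ℤ) = t + k := Int.toNat_of_nonneg hk0
        have hev : {ω | countdown Z (n + 1) t ω = k}
            = ⋃ z ∈ Finset.range (M + 1),
                ({ω | Z (n + 1) ω = z} ∩ {ω | countdown Z n (t - z) ω = k}) := by
          ext ω
          simp only [Set.mem_setOf_eq, Set.mem_iUnion, Set.mem_inter_iff, Finset.mem_range,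
            exists_prop]
          rw [countdown_succ Z n t ω (by push_cast at ht ⊢; omega)]
          constructor
          · intro h
            have hC : countdown Z n (t - Z (n + 1) ω) ω = k := by omega
            have h0 := countdown_nonneg Z n (t - Z (n + 1) ω) ω
            rw [hC] at h0
            exact ⟨Z (n + 1) ω, by omega, rfl, hC⟩
          · rintro ⟨z, hz, hZ, hC⟩
            rw [hZ, hC]
            omega
        have hmeasC : ∀ (s : ℤ), Measurable (countdown Z n s) := by
          intro s
          classical
          set T : Finset ℕ := Finset.Icc 1 n with hT
          set ψ : (T → ℕ) → ℕ := fun v =>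
            sInf {k : ℕ | ((∑ i ∈ Finset.Icc (k + 1) n,
              (if h : i ∈ T then v ⟨i, h⟩ else 0) : ℕ) : ℤ) ≤ s + k} with hψ
          have mψ : Measurable ψ := measurable_of_countable ψ
          have e2 : (ψ ∘ fun a (i : T) => Z i a) = countdown Z n s := by
            funext ω
            simp only [Function.comp_apply, hψ, countdown]
            have hsum : ∀ j : ℕ, (∑ i ∈ Finset.Icc (j + 1) n,
                (if h : i ∈ T then (fun i : T => Z i ω) ⟨i, h⟩ else 0)) =
                ∑ i ∈ Finset.Icc (j + 1) n, Z i ω := by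
              intro j
              refine Finset.sum_congr rfl fun i hi => ?_
              have hi' := Finset.mem_Icc.1 hi
              rw [dif_pos (by simp only [hT, Finset.mem_Icc]; omega)]
            congr 1
            ext j
            simp only [Set.mem_setOf_eq, hsum j]
          rw [← e2]
          exact mψ.comp (measurable_pi_lambda _ fun i => hmeas i)
        have hdisj : (Finset.range (M + 1) : Set ℕ).PairwiseDisjoint
            (fun z => ({ω | Z (n + 1) ω = z} ∩ {ω | countdown Z n (t - z) ω = k})) := by
          intro a _ b _ hab
          refine Set.disjoint_left.2 fun ω hωa hωb => hab ?_
          have h1 : Z (n + 1) ω = a := hωa.1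
          have h2 : Z (n + 1) ω = b := hωb.1
          omega
        have hmeas' : ∀ z ∈ Finset.range (M + 1), MeasurableSet
            ({ω | Z (n + 1) ω = z} ∩ {ω | countdown Z n (t - z) ω = k}) := by
          intro z _
          exact ((hmeas (n + 1)) (MeasurableSet.singleton z)).inter
            ((hmeasC (t - z)) (MeasurableSet.singleton k))
        rw [hev, measure_biUnion_finset hdisj hmeas']
        have hterm : ∀ z ∈ Finset.range (M + 1),
            P ({ω | Z (n + 1) ω = z} ∩ {ω | countdown Z n (t - z) ω = k})
              = ENNReal.ofReal
                  (x ^ ((n + 1) * z) * (1 - x ^ (n + 1)) * cdpm x n k (M - z)) := by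
          intro z hz
          have hzM : z ≤ M := Nat.lt_succ_iff.1 (Finset.mem_range.1 hz)
          have h1 : -(n : ℤ) ≤ t - z := by omega
          have h2 : (0 : ℤ) ≤ (t - z) + k := by omega
          have h3 : ((t - z) + k).toNat = M - z := by omega
          rw [cd_indep P Z hmeas hindep n (t - z) z k,
            cd_Z_pmf P hx0 hx1 Z hmeas hgeom (n + 1) (by omega) z,
            ih (t - z) h1 k hkn' h2, h3,
            ← ENNReal.ofReal_mul (mul_nonneg (pow_nonneg hx0.le _)
              (cd_one_sub_pos hx0 hx1 n).le)]
        rw [Finset.sum_congr rfl hterm,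
          ← ENNReal.ofReal_sum_of_nonneg (fun z hz => by
            have h1 := cdpm_nonneg hx0 hx1 n k (M - z)
            have h2 : (0:ℝ) ≤ 1 - x ^ (n + 1) := (cd_one_sub_pos hx0 hx1 n).le
            positivity),
          cdpm_step hx0 hx1 hkn' M]
      · -- k = n + 1
        set M : ℕ := (t + (n + 1 : ℕ)).toNat with hMdef
        have hM : (M : ℤ) = t + (n + 1) := by
          rw [hMdef, Int.toNat_of_nonneg (by push_cast at hk0 ⊢; omega)]
          push_cast
          ring
        have hev : {ω | countdown Z (n + 1) t ω = n + 1} = {ω | M ≤ Z (n + 1) ω} := by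
          ext ω
          simp only [Set.mem_setOf_eq]
          rw [countdown_succ Z n t ω (by push_cast at ht ⊢; omega)]
          constructor
          · intro h
            by_contra hcon
            have hz : -(n : ℤ) ≤ t - Z (n + 1) ω := by omega
            have := countdown_le Z n (t - Z (n + 1) ω) ω hz
            omega
          · intro h
            have hlt : t - (Z (n + 1) ω : ℤ) < -(n : ℤ) := by omega
            rw [countdown_of_lt Z n _ ω hlt]
            omega
        rw [hev, hgeom (n + 1) (by omega) M, cdpm_top hx0 hx1]
  
end CDMain

theorem countdown_reflection {Ω : Type*} [MeasurableSpace Ω] (P : Measure Ω)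
    [IsProbabilityMeasure P] (x : ℝ) (hx0 : 0 < x) (hx1 : x < 1)
    (Z : ℕ → Ω → ℕ) (hmeas : ∀ i, Measurable (Z i))
    (hindep : iIndepFun Z P)
    (hgeom : ∀ i, 1 ≤ i → ∀ k : ℕ, P {ω | k ≤ Z i ω} = ENNReal.ofReal (x ^ (i * k)))
    (n : ℕ) (t : ℤ) (ht : -(n : ℤ) ≤ t) (k : ℕ) (hk : 0 ≤ t + k) :
    P {ω | countdown Z n t ω = k}
      = P {ω | (countdown Z ((n : ℤ) + t).toNat (-t) ω : ℤ) = t + k} := by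
  classical
  set n' : ℕ := ((n : ℤ) + t).toNat with hn'def
  have hn' : (n' : ℤ) = n + t := Int.toNat_of_nonneg (by omega)
  have ht' : -(n' : ℤ) ≤ -t := by omega
  set k' : ℕ := (t + k).toNat with hk'def
  have hk' : (k' : ℤ) = t + k := Int.toNat_of_nonneg hk
  have hev : {ω | (countdown Z n' (-t) ω : ℤ) = t + k} = {ω | countdown Z n' (-t) ω = k'} := by
    ext ω
    simp only [Set.mem_setOf_eq]
    omega
  rw [hev]
  rcases le_or_gt k n with hkn | hkn
  · have hL := cd_pmf P hx0 hx1 Z hmeas hindep hgeom n t ht k hkn hk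
    have hk'n' : k' ≤ n' := by omega
    have hR := cd_pmf P hx0 hx1 Z hmeas hindep hgeom n' (-t) ht' k' hk'n' (by omega)
    rw [hL, hR]
    have h1 : (-t + (k' : ℤ)).toNat = k := by omega
    have h2 : n - k + (t + k).toNat = n' := by omega
    rw [h1, ← hk'def, cdpm_symm ((t + k).toNat) hkn, h2]
  · have hL : {ω | countdown Z n t ω = k} = ∅ := by
      ext ω
      simp only [Set.mem_setOf_eq, Set.mem_empty_iff_false, iff_false]
      intro h
      have := countdown_le Z n t ω ht
      omega
    have hR : {ω | countdown Z n' (-t) ω = k'} = ∅ := by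
      ext ω
      simp only [Set.mem_setOf_eq, Set.mem_empty_iff_false, iff_false]
      intro h
      have := countdown_le Z n' (-t) ω ht'
      omega
    rw [hL, hR]
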